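/- The function g(d) = Γ(2+2/d)^{2d/(d+4)} / 2^{4/(d+4)} satisfies g(1) > 1, g(2) = 1, and g(d) < 1 for all integers d ≥ 3. -/

import Mathlib

open Real

lemma gamma_five_halves : Real.Gamma (5/2) = 3/4 * Real.sqrt π := by
  have h1 : (5/2 : ℝ) = 3/2 + 1 := by norm_num
  have h2 : (3/2 : ℝ) = 1/2 + 1 := by norm_num
  rw [h1, Real.Gamma_add_one (by norm_num), h2, Real.Gamma_add_one (by norm_num),
    Real.Gamma_one_half_eq]
  ring

lemma factA : Real.log (Real.Gamma (5/2)) < 1/2 * Real.log 2 := by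
  rw [gamma_five_halves]
  have hlt : (3/4 : ℝ) * Real.sqrt π < Real.sqrt 2 := by
    have : (3/4 : ℝ) * Real.sqrt π = Real.sqrt (9/16 * π) := by
      rw [Real.sqrt_mul (by norm_num), show Real.sqrt (9/16) = 3/4 by
        rw [show (9/16:ℝ) = (3/4)^2 by norm_num, Real.sqrt_sq (by norm_num)]]
    rw [this]
    apply Real.sqrt_lt_sqrt (by positivity)
    nlinarith [Real.pi_lt_d2]
  have h2 : (1/2 : ℝ) * Real.log 2 = Real.log (Real.sqrt 2) := by
    rw [Real.log_sqrt (by norm_num)]; ring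
  rw [h2]
  apply Real.log_lt_log (by positivity) hlt

lemma key (t : ℝ) (ht : 0 < t) (ht2 : t ≤ 2/3) :
    Real.log (Real.Gamma (2 + t)) < t * Real.log 2 := by
  have C := Real.convexOn_log_Gamma
  have hG2 : Real.log (Real.Gamma 2) = 0 := by rw [Real.Gamma_two, Real.log_one]
  have hG3 : Real.log (Real.Gamma 3) = Real.log 2 := by
    have : (3:ℝ) = 2 + 1 := by norm_num
    rw [this, Real.Gamma_add_one (by norm_num), Real.Gamma_two, mul_one]
  rcases le_or_gt t (1/2) with h | h
  · -- 2 + t = (1 - 2t) • 2 + (2t) • (5/2)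
    have hc := C.2 (show (2:ℝ) ∈ Set.Ioi 0 by norm_num)
      (show (5/2:ℝ) ∈ Set.Ioi 0 by norm_num)
      (show (0:ℝ) ≤ 1 - 2*t by linarith) (show (0:ℝ) ≤ 2*t by linarith)
      (by ring)
    have heq : (1 - 2*t) • (2:ℝ) + (2*t) • (5/2:ℝ) = 2 + t := by
      simp [smul_eq_mul]; ring
    rw [heq] at hc
    simp only [Function.comp_apply, smul_eq_mul] at hc
    rw [hG2, mul_zero, zero_add] at hc
    calc Real.log (Real.Gamma (2 + t)) ≤ 2*t * Real.log (Real.Gamma (5/2)) := hc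
      _ < 2*t * (1/2 * Real.log 2) := by
          apply mul_lt_mul_of_pos_left factA (by linarith)
      _ = t * Real.log 2 := by ring
  · -- 2 + t = (2 - 2t) • (5/2) + (2t - 1) • 3
    have hc := C.2 (show (5/2:ℝ) ∈ Set.Ioi 0 by norm_num)
      (show (3:ℝ) ∈ Set.Ioi 0 by norm_num)
      (show (0:ℝ) ≤ 2 - 2*t by linarith) (show (0:ℝ) ≤ 2*t - 1 by linarith)
      (by ring)
    have heq : (2 - 2*t) • (5/2:ℝ) + (2*t - 1) • (3:ℝ) = 2 + t := by
      simp [smul_eq_mul]; ring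
    rw [heq] at hc
    simp only [Function.comp_apply, smul_eq_mul] at hc
    rw [hG3] at hc
    calc Real.log (Real.Gamma (2 + t))
        ≤ (2 - 2*t) * Real.log (Real.Gamma (5/2)) + (2*t - 1) * Real.log 2 := hc
      _ < (2 - 2*t) * (1/2 * Real.log 2) + (2*t - 1) * Real.log 2 := by
          apply add_lt_add_left
          apply mul_lt_mul_of_pos_left factA (by linarith)
      _ = t * Real.log 2 := by ring

lemma keyGamma (t : ℝ) (ht : 0 < t) (ht2 : t ≤ 2/3) :
    Real.Gamma (2 + t) < (2:ℝ) ^ t := by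
  have hpos : 0 < Real.Gamma (2 + t) := Real.Gamma_pos_of_pos (by linarith)
  have := key t ht ht2
  rw [Real.rpow_def_of_pos (by norm_num : (0:ℝ) < 2)]
  calc Real.Gamma (2 + t) = Real.exp (Real.log (Real.Gamma (2 + t))) :=
        (Real.exp_log hpos).symm
    _ < Real.exp (Real.log 2 * t) := by rw [Real.exp_lt_exp]; linarith [key t ht ht2]

theorem bagged_regret_ratio_values :
    (1 : ℝ) < Real.Gamma (2 + 2 / (1 : ℝ)) ^ (2 * (1 : ℝ) / ((1 : ℝ) + 4)) /
        (2 : ℝ) ^ (4 / ((1 : ℝ) + 4)) ∧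
    Real.Gamma (2 + 2 / (2 : ℝ)) ^ (2 * (2 : ℝ) / ((2 : ℝ) + 4)) /
        (2 : ℝ) ^ (4 / ((2 : ℝ) + 4)) = 1 ∧
    ∀ d : ℕ, 3 ≤ d →
      Real.Gamma (2 + 2 / (d : ℝ)) ^ (2 * (d : ℝ) / ((d : ℝ) + 4)) /
        (2 : ℝ) ^ (4 / ((d : ℝ) + 4)) < 1 := by
  have hG4 : Real.Gamma (2 + 2 / (1:ℝ)) = 6 := by
    have : (2 + 2/(1:ℝ)) = (3:ℕ) + 1 := by norm_num
    rw [this, Real.Gamma_nat_eq_factorial]; norm_num [Nat.factorial]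
  have hG3 : Real.Gamma (2 + 2 / (2:ℝ)) = 2 := by
    have : (2 + 2/(2:ℝ)) = (2:ℕ) + 1 := by norm_num
    rw [this, Real.Gamma_nat_eq_factorial]; norm_num [Nat.factorial]
  refine ⟨?_, ?_, ?_⟩
  · rw [hG4]
    rw [one_lt_div (by positivity)]
    have h6 : (6:ℝ) ^ (2 * (1:ℝ) / ((1:ℝ) + 4)) = (36:ℝ) ^ (1/5 : ℝ) := by
      rw [show (36:ℝ) = 6 ^ (2:ℕ) by norm_num, ← Real.rpow_natCast (6:ℝ) 2,
        ← Real.rpow_mul (by norm_num)]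
      norm_num
    have h2 : (2:ℝ) ^ (4 / ((1:ℝ) + 4)) = (16:ℝ) ^ (1/5 : ℝ) := by
      rw [show (16:ℝ) = 2 ^ (4:ℕ) by norm_num, ← Real.rpow_natCast (2:ℝ) 4,
        ← Real.rpow_mul (by norm_num)]
      norm_num
    rw [h6, h2]
    exact Real.rpow_lt_rpow (by norm_num) (by norm_num) (by norm_num)
  · rw [hG3]
    rw [div_eq_one_iff_eq (by positivity)]
    norm_num
  · intro d hd
    have hd3 : (3:ℝ) ≤ (d:ℝ) := by exact_mod_cast hd
    have hdpos : (0:ℝ) < d := by linarith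
    set t : ℝ := 2 / (d:ℝ) with htdef
    have ht : 0 < t := by positivity
    have ht2 : t ≤ 2/3 := by
      rw [htdef, div_le_div_iff₀ hdpos (by norm_num)]; linarith
    have hkey := keyGamma t ht ht2
    have hp : (0:ℝ) < 2 * (d:ℝ) / ((d:ℝ) + 4) := by positivity
    have hlt : Real.Gamma (2 + t) ^ (2 * (d:ℝ) / ((d:ℝ) + 4)) <
        ((2:ℝ) ^ t) ^ (2 * (d:ℝ) / ((d:ℝ) + 4)) :=
      Real.rpow_lt_rpow (le_of_lt (Real.Gamma_pos_of_pos (by linarith))) hkey hp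
    have hre : ((2:ℝ) ^ t) ^ (2 * (d:ℝ) / ((d:ℝ) + 4)) = (2:ℝ) ^ (4 / ((d:ℝ) + 4)) := by
      rw [← Real.rpow_mul (by norm_num : (0:ℝ) ≤ 2)]
      congr 1
      have hne : ((d:ℝ)) ≠ 0 := ne_of_gt hdpos
      rw [htdef]
      field_simp
      ring
    rw [hre] at hlt
    rw [div_lt_one (by positivity)]
    exact hlt
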